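/- Let ρ^{T_S} be PSD on (ℂ²)^⊗N and symmetric on the subsystem S̄ (i.e., P_{S̄} ρ^{T_S} P_{S̄} = ρ^{T_S}). If ρ^{T_S} = Σ_i |ψ_i⟩⟨ψ_i| ⊗ |e_i⟩⟨e_i| is a separable decomposition across the bipartition (all qubits except A_N)|A_N with A_N ∈ S̄, then each vector |ψ_i⟩⊗|e_i⟩ satisfies the same symmetry, and consequently |ψ_i⟩ = |ψ̃_i⟩ ⊗ |e_i⟩^⊗(|S̄|−1) with |ψ̃_i⟩ in the Hilbert space of S. -/

import Mathlib

open scoped ComplexOrder Classical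
open Matrix

abbrev QIdx (N : ℕ) := Fin N → Fin 2

def tens {a b : ℕ} (ψ : QIdx a → ℂ) (φ : QIdx b → ℂ) : QIdx (a + b) → ℂ :=
  fun f => ψ (fun i => f (Fin.castAdd b i)) * φ (fun j => f (Fin.natAdd a j))

def oneQ (e : Fin 2 → ℂ) : QIdx 1 → ℂ := fun f => e (f 0)

def prodVec {N : ℕ} (e : Fin N → (Fin 2 → ℂ)) : QIdx N → ℂ :=
  fun f => ∏ i, e i (f i)

/-- The permutation operator `V_σ` as a matrix: `(V_σ ψ) f = ψ (f ∘ σ)`. -/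
def permMat {N : ℕ} (σ : Equiv.Perm (Fin N)) : Matrix (QIdx N) (QIdx N) ℂ :=
  Matrix.of fun f g => if g = f ∘ σ then 1 else 0

/-- The orthogonal projector onto the subspace of vectors symmetric in the qubits of
the subset `T` (average of the permutation operators moving only qubits of `T`). -/
noncomputable def symSubsetProj {N : ℕ} (T : Finset (Fin N)) :
    Matrix (QIdx N) (QIdx N) ℂ :=
  ((T.card.factorial : ℂ)⁻¹) •
    ∑ σ : Equiv.Perm (Fin N), if (∀ i ∉ T, σ i = i) then permMat σ else 0

/-- Rank-one projector `|v⟩⟨v|`. -/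
def outer {N : ℕ} (v : QIdx N → ℂ) : Matrix (QIdx N) (QIdx N) ℂ :=
  Matrix.of fun f g => v f * (starRingEnd ℂ) (v g)

/-- The last `t + 1` qubits of `s + t + 1` (the subset `S̄`, whose last qubit is `A_N`). -/
def lastT (s t : ℕ) : Finset (Fin (s + t + 1)) :=
  Finset.univ.filter fun i => s ≤ (i : ℕ)

-- auxiliary
noncomputable def fixOut {N : ℕ} (T : Finset (Fin N)) : Finset (Equiv.Perm (Fin N)) :=
  Finset.univ.filter fun σ => ∀ i ∉ T, σ i = i

lemma symSubsetProj_eq {N : ℕ} (T : Finset (Fin N)) :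
    symSubsetProj T = ((T.card.factorial : ℂ)⁻¹) • ∑ σ ∈ fixOut T, permMat σ := by
  rw [symSubsetProj, fixOut, Finset.sum_filter]

lemma card_fixOut {N : ℕ} (T : Finset (Fin N)) : (fixOut T).card = T.card.factorial := by
  classical
  have h1 : (fixOut T).card = Fintype.card {σ : Equiv.Perm (Fin N) // ∀ i, ¬ i ∈ T → σ i = i} := by
    rw [Fintype.card_subtype]
    rfl
  rw [h1, ← Fintype.card_congr (Equiv.Perm.subtypeEquivSubtypePerm (· ∈ T)),
    Fintype.card_perm, Fintype.card_coe]

lemma one_mem_fixOut {N : ℕ} (T : Finset (Fin N)) : 1 ∈ fixOut T := by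
  simp [fixOut]

lemma mul_mem_fixOut {N : ℕ} {T : Finset (Fin N)} {σ τ : Equiv.Perm (Fin N)}
    (hσ : σ ∈ fixOut T) (hτ : τ ∈ fixOut T) : σ * τ ∈ fixOut T := by
  simp only [fixOut, Finset.mem_filter, Finset.mem_univ, true_and] at *
  intro i hi
  simp [hτ i hi, hσ i hi]

lemma inv_mem_fixOut {N : ℕ} {T : Finset (Fin N)} {σ : Equiv.Perm (Fin N)}
    (hσ : σ ∈ fixOut T) : σ⁻¹ ∈ fixOut T := by
  simp only [fixOut, Finset.mem_filter, Finset.mem_univ, true_and] at *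
  intro i hi
  have := hσ i hi
  conv_lhs => rw [← this]
  simp

lemma permMat_mul {N : ℕ} (σ τ : Equiv.Perm (Fin N)) :
    permMat σ * permMat τ = permMat (σ * τ) := by
  ext f g
  simp only [permMat, Matrix.mul_apply, Matrix.of_apply, ite_mul, one_mul, zero_mul]
  rw [Finset.sum_ite_eq' Finset.univ (f ∘ σ) (fun h => if g = h ∘ τ then (1:ℂ) else 0)]
  simp [Equiv.Perm.coe_mul, Function.comp_assoc]
  exact if_congr Iff.rfl rfl rfl

lemma permMat_conjTranspose {N : ℕ} (σ : Equiv.Perm (Fin N)) :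
    (permMat σ)ᴴ = permMat σ⁻¹ := by
  ext f g
  simp only [permMat, Matrix.conjTranspose_apply, Matrix.of_apply]
  have : (f = g ∘ ⇑σ) ↔ (g = f ∘ ⇑(σ⁻¹)) := by
    constructor
    · intro h; funext x; rw [h]; simp
    · intro h; funext x; rw [h]; simp
  by_cases h : f = g ∘ σ
  · rw [if_pos h, if_pos (this.mp h)]; simp
  · rw [if_neg h, if_neg (fun hh => h (this.mpr hh))]; simp

lemma sum_fixOut_reindex {N : ℕ} {T : Finset (Fin N)} {σ : Equiv.Perm (Fin N)}
    (hσ : σ ∈ fixOut T) (F : Equiv.Perm (Fin N) → Matrix (QIdx N) (QIdx N) ℂ) :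
    ∑ τ ∈ fixOut T, F (σ * τ) = ∑ τ ∈ fixOut T, F τ := by
  apply Finset.sum_equiv (Equiv.mulLeft σ)
  · intro τ
    constructor
    · intro hτ; exact mul_mem_fixOut hσ hτ
    · intro hτ
      have : τ = σ⁻¹ * (σ * τ) := by group
      rw [this]
      exact mul_mem_fixOut (inv_mem_fixOut hσ) hτ
  · intro τ _; rfl

lemma permMat_mul_symProj {N : ℕ} {T : Finset (Fin N)} {σ : Equiv.Perm (Fin N)}
    (hσ : σ ∈ fixOut T) : permMat σ * symSubsetProj T = symSubsetProj T := by
  rw [symSubsetProj_eq, Matrix.mul_smul, Finset.mul_sum]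
  congr 1
  calc ∑ τ ∈ fixOut T, permMat σ * permMat τ
      = ∑ τ ∈ fixOut T, permMat (σ * τ) := by
        exact Finset.sum_congr rfl fun τ _ => permMat_mul σ τ
    _ = _ := sum_fixOut_reindex hσ _

lemma symProj_idem {N : ℕ} (T : Finset (Fin N)) :
    symSubsetProj T * symSubsetProj T = symSubsetProj T := by
  have hc : ((T.card.factorial : ℂ)) ≠ 0 := by
    exact_mod_cast Nat.cast_ne_zero.mpr T.card.factorial_ne_zero
  nth_rewrite 1 [symSubsetProj_eq T]
  rw [Matrix.smul_mul, Finset.sum_mul]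
  rw [Finset.sum_congr rfl fun σ hσ => permMat_mul_symProj hσ]
  rw [Finset.sum_const, card_fixOut, ← Nat.cast_smul_eq_nsmul ℂ, smul_smul,
    inv_mul_cancel₀ hc, one_smul]

lemma symProj_conjTranspose {N : ℕ} (T : Finset (Fin N)) :
    (symSubsetProj T)ᴴ = symSubsetProj T := by
  rw [symSubsetProj_eq, Matrix.conjTranspose_smul, Matrix.conjTranspose_sum]
  have h1 : (starRingEnd ℂ) ((T.card.factorial : ℂ)⁻¹) = (T.card.factorial : ℂ)⁻¹ := by
    rw [map_inv₀, Complex.conj_natCast]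
  rw [show (star ((T.card.factorial : ℂ)⁻¹)) = (T.card.factorial : ℂ)⁻¹ from h1]
  congr 1
  rw [Finset.sum_congr rfl fun σ _ => permMat_conjTranspose σ]
  apply Finset.sum_equiv (Equiv.inv (Equiv.Perm (Fin N)))
  · intro σ
    constructor
    · intro hσ; exact inv_mem_fixOut hσ
    · intro hσ; simpa using inv_mem_fixOut hσ
  · intro σ _; rfl

lemma mul_outer_mul {N : ℕ} (M : Matrix (QIdx N) (QIdx N) ℂ) (v : QIdx N → ℂ) :
    M * outer v * Mᴴ = outer (M.mulVec v) := by
  ext f g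
  simp only [outer, Matrix.mul_apply, Matrix.conjTranspose_apply, Matrix.mulVec,
    dotProduct, Matrix.of_apply, map_sum, _root_.map_mul, Finset.mul_sum,
    Finset.sum_mul, Complex.star_def]
  exact Finset.sum_congr rfl fun h _ => Finset.sum_congr rfl fun k _ => by ring

lemma permMat_mulVec {N : ℕ} (σ : Equiv.Perm (Fin N)) (v : QIdx N → ℂ) (f : QIdx N) :
    (permMat σ).mulVec v f = v (f ∘ σ) := by
  simp only [permMat, Matrix.mulVec, dotProduct, Matrix.of_apply, ite_mul, one_mul,
    zero_mul]
  simpa using Finset.sum_ite_eq' Finset.univ (f ∘ σ) v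

lemma outer_sum_eq_zero {N K : ℕ} (w : Fin K → (QIdx N → ℂ))
    (h : ∑ i, outer (w i) = 0) : ∀ i, w i = 0 := by
  intro i
  funext f
  have h2 : (∑ i, outer (w i)) f f = 0 := by rw [h]; rfl
  rw [Matrix.sum_apply] at h2
  simp only [outer, Matrix.of_apply, Complex.mul_conj] at h2
  have h3 : ∑ j, Complex.normSq (w j f) = 0 := by exact_mod_cast h2
  have h4 := (Finset.sum_eq_zero_iff_of_nonneg
    (fun j _ => Complex.normSq_nonneg (w j f))).mp h3 i (Finset.mem_univ i)
  exact Complex.normSq_eq_zero.mp h4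

lemma tens_snoc {n : ℕ} (ψ : QIdx n → ℂ) (e : Fin 2 → ℂ) (g : QIdx n) (x : Fin 2) :
    tens ψ (oneQ e) (Fin.snoc g x) = ψ g * e x := by
  unfold tens oneQ
  congr 1
  · congr 1
    funext i
    show (Fin.snoc g x : QIdx (n+1)) (Fin.castSucc i) = g i
    simp
  · congr 1
    show (Fin.snoc g x : QIdx (n+1)) (Fin.last n) = x
    simp

lemma snoc_comp_swap {n : ℕ} (p : Fin n) (g : QIdx n) (x : Fin 2) :
    (Fin.snoc g x : QIdx (n+1)) ∘ (Equiv.swap (Fin.castSucc p) (Fin.last n))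
      = Fin.snoc (Function.update g p x) (g p) := by
  funext k
  induction k using Fin.lastCases with
  | last =>
    simp only [Function.comp_apply, Equiv.swap_apply_right, Fin.snoc_last, Fin.snoc_castSucc]
  | cast m =>
    by_cases hm : m = p
    · subst hm
      simp only [Function.comp_apply, Equiv.swap_apply_left, Fin.snoc_last, Fin.snoc_castSucc,
        Function.update_self]
    · have h1 : Fin.castSucc m ≠ Fin.castSucc p := fun h => hm (Fin.castSucc_injective n h)
      have h2 : Fin.castSucc m ≠ Fin.last n := ne_of_lt (Fin.castSucc_lt_last m)
      simp only [Function.comp_apply, Equiv.swap_apply_of_ne_of_ne h1 h2, Fin.snoc_castSucc,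
        Function.update_of_ne hm]

def setA {s t : ℕ} (b : Fin 2) (A : Finset (Fin t)) (g : QIdx (s + t)) : QIdx (s + t) :=
  fun k => if ∃ j ∈ A, Fin.natAdd s j = k then b else g k

lemma natAdd_injective (s : ℕ) {t : ℕ} : Function.Injective (Fin.natAdd s (m := t)) := by
  intro a b h
  have := congrArg Fin.val h
  simp only [Fin.natAdd] at this
  exact Fin.ext (Nat.add_left_cancel this)

lemma setA_insert {s t : ℕ} (b : Fin 2) {A : Finset (Fin t)} {j : Fin t} (hj : j ∉ A)
    (g : QIdx (s + t)) :
    setA b (insert j A) g = Function.update (setA b A g) (Fin.natAdd s j) b := by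
  funext k
  by_cases hk : Fin.natAdd s j = k
  · subst hk
    simp only [setA, Function.update_self]
    rw [if_pos ⟨j, Finset.mem_insert_self j A, rfl⟩]
  · rw [Function.update_of_ne (Ne.symm hk)]
    simp only [setA]
    congr 1
    simp only [eq_iff_iff]
    constructor
    · rintro ⟨j', hj', hjk⟩
      rcases Finset.mem_insert.mp hj' with h | h
      · exact absurd (h ▸ hjk) hk
      · exact ⟨j', h, hjk⟩
    · rintro ⟨j', hj', hjk⟩; exact ⟨j', Finset.mem_insert_of_mem hj', hjk⟩

lemma setA_apply_natAdd_not_mem {s t : ℕ} (b : Fin 2) {A : Finset (Fin t)} {j : Fin t}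
    (hj : j ∉ A) (g : QIdx (s + t)) : setA b A g (Fin.natAdd s j) = g (Fin.natAdd s j) := by
  simp only [setA]
  rw [if_neg]
  rintro ⟨j', hj', hjk⟩
  exact hj ((natAdd_injective s hjk) ▸ hj')

lemma setA_univ {s t : ℕ} (b : Fin 2) (g : QIdx (s + t)) :
    setA b Finset.univ g = Fin.append (fun i : Fin s => g (Fin.castAdd t i)) (fun _ : Fin t => b) := by
  funext k
  induction k using Fin.addCases with
  | left i =>
    rw [Fin.append_left]
    simp only [setA]
    rw [if_neg]
    rintro ⟨j', _, hjk⟩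
    have := congrArg Fin.val hjk
    simp only [Fin.natAdd, Fin.castAdd, Fin.castLE] at this
    omega
  | right j =>
    rw [Fin.append_right]
    simp only [setA]
    rw [if_pos ⟨j, Finset.mem_univ j, rfl⟩]

lemma factor_of_rel {s t : ℕ} (ψ : QIdx (s + t) → ℂ) (e : Fin 2 → ℂ) (b : Fin 2)
    (hb : e b ≠ 0)
    (hrel : ∀ (j : Fin t) (g : QIdx (s + t)) (x : Fin 2),
      ψ (Function.update g (Fin.natAdd s j) x) * e (g (Fin.natAdd s j)) = ψ g * e x) :
    ∃ ψt : QIdx s → ℂ, ψ = tens ψt (prodVec fun _ : Fin t => e) := by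
  have key : ∀ (A : Finset (Fin t)) (g : QIdx (s + t)),
      ψ (setA b A g) * ∏ j ∈ A, e (g (Fin.natAdd s j)) = ψ g * (e b) ^ A.card := by
    intro A
    induction A using Finset.induction_on with
    | empty =>
      intro g
      simp only [Finset.prod_empty, mul_one, Finset.card_empty, pow_zero]
      have : setA b ∅ g = g := by funext k; simp [setA]
      rw [this]
    | @insert j A hj ihA =>
      intro g
      rw [Finset.prod_insert hj, Finset.card_insert_of_notMem hj, setA_insert b hj g]
      have h1 := hrel j (setA b A g) b
      rw [setA_apply_natAdd_not_mem b hj g] at h1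
      rw [← mul_assoc, h1]
      calc ψ (setA b A g) * e b * ∏ j' ∈ A, e (g (Fin.natAdd s j'))
          = (ψ (setA b A g) * ∏ j' ∈ A, e (g (Fin.natAdd s j'))) * e b := by ring
        _ = ψ g * (e b) ^ A.card * e b := by rw [ihA g]
        _ = ψ g * (e b) ^ (A.card + 1) := by ring
  refine ⟨fun h => ψ (Fin.append h (fun _ : Fin t => b)) * ((e b) ^ t)⁻¹, ?_⟩
  funext g
  have hk := key Finset.univ g
  rw [setA_univ, Finset.card_univ, Fintype.card_fin] at hk
  have hpow : (e b) ^ t ≠ 0 := pow_ne_zero t hb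
  unfold tens prodVec
  field_simp
  exact hk.symm

/-- let `τ = ρ^{T_S}` be PSD on `N = s + t + 1` qubits (`S` the first `s`
qubits, `S̄` the last `t + 1` qubits with last qubit `A_N`), symmetric on `S̄`
(`P_{S̄} τ P_{S̄} = τ`).  If `τ = Σ_i |ψ_i⟩⟨ψ_i| ⊗ |e_i⟩⟨e_i|` is a separable
decomposition across (everything else)|`A_N`, then each `|ψ_i⟩ ⊗ |e_i⟩` is invariant
under `P_{S̄}`, and consequently `|ψ_i⟩ = |ψ̃_i⟩ ⊗ |e_i⟩^⊗t` with `|ψ̃_i⟩` on `S`. -/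
theorem stmt11 (s t K : ℕ)
    (τ : Matrix (QIdx (s + t + 1)) (QIdx (s + t + 1)) ℂ)
    (ψ : Fin K → (QIdx (s + t) → ℂ)) (e : Fin K → (Fin 2 → ℂ))
    (he : ∀ i, e i ≠ 0)
    (hPSD : τ.PosSemidef)
    (hsym : symSubsetProj (lastT s t) * τ * symSubsetProj (lastT s t) = τ)
    (hdec : τ = ∑ i : Fin K, outer (tens (ψ i) (oneQ (e i)))) :
    (∀ i, (symSubsetProj (lastT s t)).mulVec (tens (ψ i) (oneQ (e i)))
        = tens (ψ i) (oneQ (e i))) ∧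
    (∀ i, ∃ ψt : QIdx s → ℂ, ψ i = tens ψt (prodVec fun _ : Fin t => e i)) := by
  have hQP : (1 - symSubsetProj (lastT s t)) * symSubsetProj (lastT s t) = 0 := by
    rw [sub_mul, one_mul, symProj_idem, sub_self]
  have hPQ : symSubsetProj (lastT s t) * (1 - symSubsetProj (lastT s t)) = 0 := by
    rw [mul_sub, mul_one, symProj_idem, sub_self]
  have hQH : (1 - symSubsetProj (lastT s t))ᴴ = 1 - symSubsetProj (lastT s t) := by
    rw [Matrix.conjTranspose_sub, Matrix.conjTranspose_one, symProj_conjTranspose]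
  have hzero : (1 - symSubsetProj (lastT s t)) * τ * (1 - symSubsetProj (lastT s t))ᴴ = 0 := by
    rw [hQH]
    nth_rewrite 1 [← hsym]
    have : (1 - symSubsetProj (lastT s t)) * (symSubsetProj (lastT s t) * τ *
          symSubsetProj (lastT s t)) * (1 - symSubsetProj (lastT s t))
        = ((1 - symSubsetProj (lastT s t)) * symSubsetProj (lastT s t)) * τ *
          (symSubsetProj (lastT s t) * (1 - symSubsetProj (lastT s t))) := by
      noncomm_ring
    rw [this, hQP, hPQ, Matrix.zero_mul, Matrix.mul_zero]
  have hsum : ∑ i, outer ((1 - symSubsetProj (lastT s t)).mulVec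
      (tens (ψ i) (oneQ (e i)))) = 0 := by
    rw [← hzero, hdec, Finset.mul_sum, Finset.sum_mul]
    exact Finset.sum_congr rfl fun i _ => (mul_outer_mul _ _).symm
  have hQv := outer_sum_eq_zero _ hsum
  have part1 : ∀ i, (symSubsetProj (lastT s t)).mulVec (tens (ψ i) (oneQ (e i)))
      = tens (ψ i) (oneQ (e i)) := by
    intro i
    have h := hQv i
    rw [Matrix.sub_mulVec, Matrix.one_mulVec, sub_eq_zero] at h
    exact h.symm
  refine ⟨part1, ?_⟩
  intro i
  obtain ⟨b, hb⟩ : ∃ b, e i b ≠ 0 := Function.ne_iff.mp (he i)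
  apply factor_of_rel (ψ i) (e i) b hb
  intro j g x
  set σ : Equiv.Perm (Fin (s + t + 1)) :=
    Equiv.swap (Fin.castSucc (Fin.natAdd s j)) (Fin.last (s + t)) with hσdef
  have hσ : σ ∈ fixOut (lastT s t) := by
    simp only [fixOut, Finset.mem_filter, Finset.mem_univ, true_and]
    intro k hk
    simp only [lastT, Finset.mem_filter, Finset.mem_univ, true_and, not_le] at hk
    apply Equiv.swap_apply_of_ne_of_ne
    · intro h
      have hval : (k : ℕ) = s + (j : ℕ) := congrArg Fin.val h
      omega
    · intro h
      have hval : (k : ℕ) = s + t := congrArg Fin.val h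
      omega
  have h1 : (permMat σ).mulVec (tens (ψ i) (oneQ (e i))) = tens (ψ i) (oneQ (e i)) := by
    calc (permMat σ).mulVec (tens (ψ i) (oneQ (e i)))
        = (permMat σ).mulVec ((symSubsetProj (lastT s t)).mulVec
            (tens (ψ i) (oneQ (e i)))) := by rw [part1 i]
      _ = (permMat σ * symSubsetProj (lastT s t)).mulVec (tens (ψ i) (oneQ (e i))) :=
            Matrix.mulVec_mulVec _ _ _
      _ = (symSubsetProj (lastT s t)).mulVec (tens (ψ i) (oneQ (e i))) := by
            rw [permMat_mul_symProj hσ]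
      _ = tens (ψ i) (oneQ (e i)) := part1 i
  have h2 : tens (ψ i) (oneQ (e i)) ((Fin.snoc g x : QIdx (s + t + 1)) ∘ σ)
      = tens (ψ i) (oneQ (e i)) (Fin.snoc g x) := by
    rw [← permMat_mulVec σ (tens (ψ i) (oneQ (e i))) (Fin.snoc g x)]
    exact congrFun h1 (Fin.snoc g x)
  rw [hσdef, snoc_comp_swap, tens_snoc, tens_snoc] at h2
  exact h2
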